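/- Let T be a tree on n vertices and S a global defensive alliance in T with |S| = k. Then the number of edges of T with both endpoints in S is at least n/2 − k. -/

import Mathlib

open SimpleGraph Finset
open scoped Classical

/-- The closed neighborhood `N[v]` of a vertex `v`. -/
noncomputable def closedNbhd {V : Type*} [Fintype V] (G : SimpleGraph V) (v : V) : Finset V :=
  insert v (Finset.univ.filter (fun u => G.Adj v u))

/-- `S` is a dominating set: every vertex outside `S` has a neighbor in `S`. -/
def Dominating {V : Type*} [Fintype V] (G : SimpleGraph V) (S : Finset V) : Prop :=
  ∀ v, v ∉ S → ∃ u ∈ S, G.Adj v u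

/-- `S` is a global defensive alliance. -/
def GlobalDefensiveAlliance {V : Type*} [Fintype V] (G : SimpleGraph V) (S : Finset V) : Prop :=
  Dominating G S ∧ ∀ v ∈ S, (closedNbhd G v \ S).card ≤ (closedNbhd G v ∩ S).card

/-- `S` is a global offensive alliance. -/
def GlobalOffensiveAlliance {V : Type*} [Fintype V] (G : SimpleGraph V) (S : Finset V) : Prop :=
  Dominating G S ∧ ∀ v, v ∉ S → (∃ u ∈ S, G.Adj v u) →
    (closedNbhd G v \ S).card ≤ (closedNbhd G v ∩ S).card

/-- Edges with both endpoints in `S`. -/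
noncomputable def edgesInside {V : Type*} [Fintype V] (G : SimpleGraph V) (S : Finset V) :
    Finset (Sym2 V) :=
  G.edgeFinset.filter (fun e => ∀ x ∈ e, x ∈ S)

/-- Edges with both endpoints outside `S`. -/
noncomputable def edgesOutside {V : Type*} [Fintype V] (G : SimpleGraph V) (S : Finset V) :
    Finset (Sym2 V) :=
  G.edgeFinset.filter (fun e => ∀ x ∈ e, x ∉ S)

/-- Edges with exactly one endpoint in `S`. -/
noncomputable def edgesBetween {V : Type*} [Fintype V] (G : SimpleGraph V) (S : Finset V) :
    Finset (Sym2 V) :=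
  G.edgeFinset.filter (fun e => (∃ x ∈ e, x ∈ S) ∧ (∃ x ∈ e, x ∉ S))

/-- The global defensive alliance number `γ_a(G)`. -/
noncomputable def gammaA {V : Type*} [Fintype V] (G : SimpleGraph V) : ℕ :=
  sInf {k | ∃ S : Finset V, GlobalDefensiveAlliance G S ∧ S.card = k}

/-- The global offensive alliance number `γ_o(G)`. -/
noncomputable def gammaO {V : Type*} [Fintype V] (G : SimpleGraph V) : ℕ :=
  sInf {k | ∃ S : Finset V, GlobalOffensiveAlliance G S ∧ S.card = k}

section AuxLemmas

variable {V : Type*} [Fintype V] (G : SimpleGraph V) (S : Finset V)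

lemma aux_dom (h : ∀ v, v ∉ S → ∃ u ∈ S, G.Adj v u) :
    Sᶜ.card ≤ (edgesBetween G S).card := by
  have hch : ∀ v ∈ Sᶜ, ∃ u, u ∈ S ∧ G.Adj v u := by
    intro v hv; simpa using h v (by simpa using hv)
  choose f hfS hfA using hch
  apply Finset.card_le_card_of_injOn (fun v => if hv : v ∈ Sᶜ then s(v, f v hv) else s(v, v))
  · intro v hv
    simp only [Finset.mem_coe] at hv ⊢
    simp only [hv, dif_pos]
    simp only [edgesBetween, mem_filter, mem_edgeFinset, mem_edgeSet]
    refine ⟨hfA v hv, ⟨f v hv, by simp, hfS v hv⟩, ⟨v, by simp, by simpa using hv⟩⟩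
  · intro a ha b hb hab
    simp only [Finset.mem_coe] at ha hb
    simp only [ha, hb, dif_pos] at hab
    rw [Sym2.eq_iff] at hab
    rcases hab with ⟨h1, _⟩ | ⟨h1, h2⟩
    · exact h1
    · exact absurd (h1 ▸ hfS b hb) (by simpa using ha)

lemma aux_between :
    (edgesBetween G S).card = ∑ v ∈ S, (Sᶜ.filter (fun u => G.Adj v u)).card := by
  classical
  set P := (S ×ˢ Sᶜ).filter (fun p => G.Adj p.1 p.2) with hP
  have h1 : P.card = ∑ v ∈ S, (P.filter (fun p => p.1 = v)).card := by
    apply Finset.card_eq_sum_card_fiberwise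
    intro p hp
    simp only [Finset.mem_coe, hP, mem_filter, mem_product] at hp
    exact hp.1.1
  have h2 : ∀ v ∈ S, (P.filter (fun p => p.1 = v)).card
      = (Sᶜ.filter (fun u => G.Adj v u)).card := by
    intro v hv
    apply Finset.card_bij (fun p _ => p.2)
    · intro p hp
      simp only [hP, mem_filter, mem_product] at hp ⊢
      exact ⟨hp.1.1.2, hp.2 ▸ hp.1.2⟩
    · intro a ha b hb hab
      simp only [hP, mem_filter] at ha hb
      exact Prod.ext (ha.2.trans hb.2.symm) hab
    · intro u hu
      simp only [mem_filter] at hu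
      exact ⟨(v, u), by simp [hP, hv, hu.1, hu.2], rfl⟩
  have h3 : (edgesBetween G S).card = P.card := by
    symm
    apply Finset.card_bij (fun p _ => s(p.1, p.2))
    · intro p hp
      simp only [hP, mem_filter, mem_product] at hp
      simp only [edgesBetween, mem_filter, mem_edgeFinset, mem_edgeSet]
      exact ⟨hp.2, ⟨p.1, Sym2.mem_mk_left _ _, hp.1.1⟩, ⟨p.2, Sym2.mem_mk_right _ _, by simpa using hp.1.2⟩⟩
    · intro a ha b hb hab
      simp only [hP, mem_filter, mem_product, mem_compl] at ha hb
      rw [Sym2.eq_iff] at hab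
      rcases hab with ⟨h1, h2⟩ | ⟨h1, h2⟩
      · exact Prod.ext h1 h2
      · exact absurd (h1 ▸ ha.1.1) hb.1.2
    · intro e he
      simp only [edgesBetween, mem_filter, mem_edgeFinset] at he
      induction e with
      | _ x y =>
        obtain ⟨hadj, ⟨a, hae, haS⟩, ⟨b, hbe, hbS⟩⟩ := he
        rw [Sym2.mem_iff] at hae hbe
        rw [mem_edgeSet] at hadj
        rcases hae with rfl | rfl <;> rcases hbe with rfl | rfl
        · exact absurd haS hbS
        · exact ⟨(a, b), by simp [hP, haS, hbS, hadj], rfl⟩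
        · exact ⟨(a, b), by simp [hP, haS, hbS, hadj.symm], Sym2.eq_swap⟩
        · exact absurd haS hbS
  rw [h3, h1]
  exact Finset.sum_congr rfl h2

lemma aux_inside :
    2 * (edgesInside G S).card = ∑ v ∈ S, (S.filter (fun u => G.Adj v u)).card := by
  classical
  set G' : SimpleGraph V :=
    { Adj := fun a b => G.Adj a b ∧ a ∈ S ∧ b ∈ S
      symm := ⟨fun a b ⟨h1, h2, h3⟩ => ⟨h1.symm, h3, h2⟩⟩
      loopless := ⟨fun a ⟨h1, _⟩ => G.irrefl h1⟩ } with hG'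
  have hedge : G'.edgeFinset = edgesInside G S := by
    ext e
    induction e with
    | _ x y =>
      simp only [mem_edgeFinset, mem_edgeSet, edgesInside, mem_filter, hG']
      constructor
      · rintro ⟨h1, h2, h3⟩
        exact ⟨h1, by intro z hz; rw [Sym2.mem_iff] at hz; rcases hz with rfl | rfl <;> assumption⟩
      · rintro ⟨h1, h2⟩
        exact ⟨h1, h2 x (Sym2.mem_mk_left _ _), h2 y (Sym2.mem_mk_right _ _)⟩
  set Q := (S ×ˢ S).filter (fun p => G.Adj p.1 p.2) with hQ
  have h0 : 2 * (edgesInside G S).card = Q.card := by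
    rw [← hedge, SimpleGraph.two_mul_card_edgeFinset]
    congr 1
    ext p
    simp only [hQ, mem_filter, mem_product, mem_univ, true_and, hG']
    tauto
  have h1 : Q.card = ∑ v ∈ S, (Q.filter (fun p => p.1 = v)).card := by
    apply Finset.card_eq_sum_card_fiberwise
    intro p hp
    simp only [Finset.mem_coe, hQ, mem_filter, mem_product] at hp
    exact hp.1.1
  have h2 : ∀ v ∈ S, (Q.filter (fun p => p.1 = v)).card
      = (S.filter (fun u => G.Adj v u)).card := by
    intro v hv
    apply Finset.card_bij (fun p _ => p.2)
    · intro p hp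
      simp only [hQ, mem_filter, mem_product] at hp ⊢
      exact ⟨hp.1.1.2, hp.2 ▸ hp.1.2⟩
    · intro a ha b hb hab
      simp only [hQ, mem_filter] at ha hb
      exact Prod.ext (ha.2.trans hb.2.symm) hab
    · intro u hu
      simp only [mem_filter] at hu
      exact ⟨(v, u), by simp [hQ, hv, hu.1, hu.2], rfl⟩
  rw [h0, h1]
  exact Finset.sum_congr rfl h2

lemma aux_alliance {v : V} (hv : v ∈ S)
    (h : (closedNbhd G v \ S).card ≤ (closedNbhd G v ∩ S).card) :
    (Sᶜ.filter (fun u => G.Adj v u)).card ≤ (S.filter (fun u => G.Adj v u)).card + 1 := by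
  have e1 : closedNbhd G v \ S = Sᶜ.filter (fun u => G.Adj v u) := by
    ext x
    simp only [closedNbhd, mem_sdiff, mem_insert, mem_filter, mem_univ, true_and, mem_compl]
    constructor
    · rintro ⟨rfl | hx, hxS⟩
      · exact absurd hv hxS
      · exact ⟨hxS, hx⟩
    · rintro ⟨hxS, hx⟩; exact ⟨Or.inr hx, hxS⟩
  have e2 : closedNbhd G v ∩ S = insert v (S.filter (fun u => G.Adj v u)) := by
    ext x
    simp only [closedNbhd, mem_inter, mem_insert, mem_filter, mem_univ, true_and]
    constructor
    · rintro ⟨rfl | hx, hxS⟩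
      · exact Or.inl rfl
      · exact Or.inr ⟨hxS, hx⟩
    · rintro (rfl | ⟨hxS, hx⟩)
      · exact ⟨Or.inl rfl, hv⟩
      · exact ⟨Or.inr hx, hxS⟩
  rw [e1, e2] at h
  calc (Sᶜ.filter (fun u => G.Adj v u)).card
      ≤ (insert v (S.filter (fun u => G.Adj v u))).card := h
    _ ≤ (S.filter (fun u => G.Adj v u)).card + 1 := Finset.card_insert_le _ _

end AuxLemmas

/-- For a global defensive alliance S of size k in a tree on n vertices,
the number of edges with both endpoints in S is at least n/2 - k. -/
theorem stmt_4 {V : Type*} [Fintype V] (G : SimpleGraph V) (hT : G.IsTree)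
    (S : Finset V) (hS : GlobalDefensiveAlliance G S) (k : ℕ) (hk : S.card = k) :
    (Fintype.card V : ℝ) / 2 - k ≤ ((edgesInside G S).card : ℝ) := by
  have hB : Sᶜ.card ≤ (edgesBetween G S).card := aux_dom G S hS.1
  have hBle : (edgesBetween G S).card ≤ 2 * (edgesInside G S).card + S.card := by
    rw [aux_between, aux_inside]
    calc ∑ v ∈ S, (Sᶜ.filter (fun u => G.Adj v u)).card
        ≤ ∑ v ∈ S, ((S.filter (fun u => G.Adj v u)).card + 1) :=
          Finset.sum_le_sum (fun v hv => aux_alliance G S hv (hS.2 v hv))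
      _ = ∑ v ∈ S, (S.filter (fun u => G.Adj v u)).card + S.card := by
          rw [Finset.sum_add_distrib, Finset.sum_const, smul_eq_mul, mul_one]
  have hn : Fintype.card V = S.card + Sᶜ.card := (Finset.card_add_card_compl S).symm
  have key : Fintype.card V ≤ 2 * (edgesInside G S).card + 2 * k := by omega
  have h : (Fintype.card V : ℝ) ≤ 2 * (edgesInside G S).card + 2 * k := by
    exact_mod_cast key
  linarith
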